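/- Let R > 0 and u > √3. Define in ℝ² the Beltrami points P₂ = (−R/√(u² − 3), −Ru/√(u² − 3)) and U₂ = (R/√(u² − 3), −Ru/√(u² − 3)), and the isodynamic points X₁₅ = (0, R(√3 − u)/√(u² − 3)) and X₁₆ = (0, −R(√3 + u)/√(u² − 3)). Then dist(P₂, U₂) = dist(X₁₅, P₂) = dist(X₁₅, U₂) = dist(X₁₆, P₂) = dist(X₁₆, U₂) = 2R/√(u² − 3); in particular the triangles X₁₅P₂U₂ and X₁₆P₂U₂ are equilateral, and the two circles of radius ρ = 2R/√(u² − 3) centered at P₂ and U₂ intersect exactly in the points X₁₅ and X₁₆. -/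

import Mathlib

open Real

lemma dist_fin2 (x y : EuclideanSpace ℝ (Fin 2)) :
    dist x y = Real.sqrt ((x 0 - y 0) ^ 2 + (x 1 - y 1) ^ 2) := by
  rw [EuclideanSpace.dist_eq, Fin.sum_univ_two]
  simp [Real.dist_eq, sq_abs]

theorem stmt_5 (R u : ℝ) (hR : 0 < R) (hu : Real.sqrt 3 < u)
    (P2 U2 X15 X16 : EuclideanSpace ℝ (Fin 2))
    (hP2 : P2 = ![-(R / Real.sqrt (u ^ 2 - 3)), -(R * u / Real.sqrt (u ^ 2 - 3))])
    (hU2 : U2 = ![R / Real.sqrt (u ^ 2 - 3), -(R * u / Real.sqrt (u ^ 2 - 3))])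
    (h15 : X15 = ![0, R * (Real.sqrt 3 - u) / Real.sqrt (u ^ 2 - 3)])
    (h16 : X16 = ![0, -(R * (Real.sqrt 3 + u) / Real.sqrt (u ^ 2 - 3))]) :
    dist P2 U2 = 2 * R / Real.sqrt (u ^ 2 - 3) ∧
    dist X15 P2 = 2 * R / Real.sqrt (u ^ 2 - 3) ∧
    dist X15 U2 = 2 * R / Real.sqrt (u ^ 2 - 3) ∧
    dist X16 P2 = 2 * R / Real.sqrt (u ^ 2 - 3) ∧
    dist X16 U2 = 2 * R / Real.sqrt (u ^ 2 - 3) ∧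
    Metric.sphere P2 (2 * R / Real.sqrt (u ^ 2 - 3)) ∩
        Metric.sphere U2 (2 * R / Real.sqrt (u ^ 2 - 3)) = {X15, X16} := by
  have h3 : (0:ℝ) ≤ 3 := by norm_num
  have h3s : (Real.sqrt 3) ^ 2 = 3 := Real.sq_sqrt h3
  have hu0 : 0 < u := lt_of_le_of_lt (Real.sqrt_nonneg 3) hu
  have hu3 : 3 < u ^ 2 := by nlinarith [Real.sqrt_nonneg 3]
  set s := Real.sqrt (u ^ 2 - 3) with hsdef
  have hs : 0 < s := Real.sqrt_pos.mpr (by linarith)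
  have hs2 : s ^ 2 = u ^ 2 - 3 := Real.sq_sqrt (by linarith)
  have hρ : 0 ≤ 2 * R / s := by positivity
  -- the five distances
  have d1 : dist P2 U2 = 2 * R / s := by
    rw [dist_fin2, hP2, hU2]
    simp only [Matrix.cons_val_zero, Matrix.cons_val_one, Matrix.head_cons]
    rw [show (-(R / s) - R / s) ^ 2 + (-(R * u / s) - -(R * u / s)) ^ 2 = (2 * R / s) ^ 2 by ring,
      Real.sqrt_sq hρ]
  have d2 : dist X15 P2 = 2 * R / s := by
    rw [dist_fin2, h15, hP2]
    simp only [Matrix.cons_val_zero, Matrix.cons_val_one, Matrix.head_cons]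
    rw [show (0 - -(R / s)) ^ 2 + (R * (Real.sqrt 3 - u) / s - -(R * u / s)) ^ 2
        = (2 * R / s) ^ 2 by linear_combination (R / s) ^ 2 * h3s, Real.sqrt_sq hρ]
  have d3 : dist X15 U2 = 2 * R / s := by
    rw [dist_fin2, h15, hU2]
    simp only [Matrix.cons_val_zero, Matrix.cons_val_one, Matrix.head_cons]
    rw [show (0 - R / s) ^ 2 + (R * (Real.sqrt 3 - u) / s - -(R * u / s)) ^ 2
        = (2 * R / s) ^ 2 by linear_combination (R / s) ^ 2 * h3s, Real.sqrt_sq hρ]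
  have d4 : dist X16 P2 = 2 * R / s := by
    rw [dist_fin2, h16, hP2]
    simp only [Matrix.cons_val_zero, Matrix.cons_val_one, Matrix.head_cons]
    rw [show (0 - -(R / s)) ^ 2 + (-(R * (Real.sqrt 3 + u) / s) - -(R * u / s)) ^ 2
        = (2 * R / s) ^ 2 by linear_combination (R / s) ^ 2 * h3s, Real.sqrt_sq hρ]
  have d5 : dist X16 U2 = 2 * R / s := by
    rw [dist_fin2, h16, hU2]
    simp only [Matrix.cons_val_zero, Matrix.cons_val_one, Matrix.head_cons]
    rw [show (0 - R / s) ^ 2 + (-(R * (Real.sqrt 3 + u) / s) - -(R * u / s)) ^ 2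
        = (2 * R / s) ^ 2 by linear_combination (R / s) ^ 2 * h3s, Real.sqrt_sq hρ]
  refine ⟨d1, d2, d3, d4, d5, ?_⟩
  ext p
  simp only [Set.mem_inter_iff, Metric.mem_sphere, Set.mem_insert_iff, Set.mem_singleton_iff]
  constructor
  · rintro ⟨h1, h2⟩
    rw [dist_fin2, hP2] at h1
    rw [dist_fin2, hU2] at h2
    simp only [Matrix.cons_val_zero, Matrix.cons_val_one, Matrix.head_cons] at h1 h2
    have e1 : (p 0 + R / s) ^ 2 + (p 1 + R * u / s) ^ 2 = (2 * R / s) ^ 2 := by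
      have h1' := congrArg (· ^ 2) h1
      simp only [Real.sq_sqrt (by positivity : (0:ℝ) ≤ (p 0 - -(R / s)) ^ 2 + (p 1 - -(R * u / s)) ^ 2)] at h1'
      linear_combination h1'
    have e2 : (p 0 - R / s) ^ 2 + (p 1 + R * u / s) ^ 2 = (2 * R / s) ^ 2 := by
      have h2' := congrArg (· ^ 2) h2
      simp only [Real.sq_sqrt (by positivity : (0:ℝ) ≤ (p 0 - R / s) ^ 2 + (p 1 - -(R * u / s)) ^ 2)] at h2'
      linear_combination h2'
    have hp0 : p 0 = 0 := by
      have h4 : (4 * (R / s)) * p 0 = 0 := by linear_combination e1 - e2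
      exact (mul_eq_zero.mp h4).resolve_left (by positivity)
    rw [hp0] at e1
    have hsq : (p 1 + R * u / s) ^ 2 = (Real.sqrt 3 * R / s) ^ 2 := by
      linear_combination e1 - (R / s) ^ 2 * h3s
    rcases sq_eq_sq_iff_eq_or_eq_neg.mp hsq with h | h
    · left
      apply WithLp.ofLp_injective
      rw [h15]
      funext i
      fin_cases i
      · show p 0 = 0
        exact hp0
      · show p 1 = R * (Real.sqrt 3 - u) / s
        have hp1 : p 1 = Real.sqrt 3 * R / s - R * u / s := by linarith
        rw [hp1]; ring
    · right
      apply WithLp.ofLp_injective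
      rw [h16]
      funext i
      fin_cases i
      · show p 0 = 0
        exact hp0
      · show p 1 = -(R * (Real.sqrt 3 + u) / s)
        have hp1 : p 1 = -(Real.sqrt 3 * R / s) - R * u / s := by linarith
        rw [hp1]; ring
  · rintro (rfl | rfl)
    · exact ⟨d2, d3⟩
    · exact ⟨d4, d5⟩
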